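/- Let a two-player zero-sum POSG with finite horizon H be given, let 0 ≤ τ ≤ H−1 and let o_τ be an occupancy state. Then the maximin and minimax values of the local game Q*_τ(o_τ, ·, ·) over behavioral decision rule profiles at time τ coincide and both equal the optimal value of the subgame at o_τ: sup_{β¹_τ} inf_{β²_τ} Q*_τ(o_τ, β¹_τ, β²_τ) = inf_{β²_τ} sup_{β¹_τ} Q*_τ(o_τ, β¹_τ, β²_τ) = V*_τ(o_τ). -/

import Mathlib

open Finset Set

section Minimax

variable {I J : Type} [Fintype I] [Fintype J]

noncomputable def BL (C : I → J → ℝ) (x : I → ℝ) (y : J → ℝ) : ℝ :=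
  ∑ i, ∑ j, x i * y j * C i j

lemma BL_eq_left (C : I → J → ℝ) (x : I → ℝ) (y : J → ℝ) :
    BL C x y = ∑ i, x i * (∑ j, y j * C i j) := by
  unfold BL
  refine Finset.sum_congr rfl fun i _ => ?_
  rw [Finset.mul_sum]
  exact Finset.sum_congr rfl fun j _ => by ring

lemma BL_eq_right (C : I → J → ℝ) (x : I → ℝ) (y : J → ℝ) :
    BL C x y = ∑ j, y j * (∑ i, x i * C i j) := by
  unfold BL
  rw [Finset.sum_comm]
  refine Finset.sum_congr rfl fun j _ => ?_
  rw [Finset.mul_sum]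
  exact Finset.sum_congr rfl fun i _ => by ring

lemma BL_affine_left (C : I → J → ℝ) (x x' : I → ℝ) (y : J → ℝ) (a b : ℝ) :
    BL C (a • x + b • x') y = a * BL C x y + b * BL C x' y := by
  simp only [BL_eq_left, Pi.add_apply, Pi.smul_apply, smul_eq_mul, add_mul,
    Finset.sum_add_distrib, Finset.mul_sum]
  congr 1 <;> exact Finset.sum_congr rfl fun i _ => Finset.sum_congr rfl fun j _ => by ring

lemma BL_sum_right {K : Type} (C : I → J → ℝ) (x : I → ℝ) (s : Finset K)
    (c : K → ℝ) (ys : K → J → ℝ) :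
    BL C x (∑ k ∈ s, c k • ys k) = ∑ k ∈ s, c k * BL C x (ys k) := by
  simp only [BL_eq_right, Finset.sum_apply, Pi.smul_apply, smul_eq_mul, Finset.sum_mul]
  rw [Finset.sum_comm]
  refine Finset.sum_congr rfl fun k _ => ?_
  rw [Finset.mul_sum]
  refine Finset.sum_congr rfl fun j _ => ?_
  ring

lemma BL_cont_left (C : I → J → ℝ) (y : J → ℝ) : Continuous fun x => BL C x y := by
  have h : (fun x => BL C x y) = fun x : I → ℝ => ∑ i, x i * (∑ j, y j * C i j) :=
    funext fun x => BL_eq_left C x y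
  rw [h]
  exact continuous_finset_sum _ fun i _ => (continuous_apply i).mul continuous_const

lemma BL_cont_right (C : I → J → ℝ) (x : I → ℝ) : Continuous fun y => BL C x y := by
  have h : (fun y => BL C x y) = fun y : J → ℝ => ∑ j, y j * (∑ i, x i * C i j) :=
    funext fun y => BL_eq_right C x y
  rw [h]
  exact continuous_finset_sum _ fun j _ => (continuous_apply j).mul continuous_const

lemma BL_abs_le (C : I → J → ℝ) (x : I → ℝ) (y : J → ℝ) (Rx Ry : ℝ)
    (hx : ∀ i, |x i| ≤ Rx) (hy : ∀ j, |y j| ≤ Ry) :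
    |BL C x y| ≤ ∑ i, ∑ j, Rx * Ry * |C i j| := by
  refine (Finset.abs_sum_le_sum_abs _ _).trans (Finset.sum_le_sum fun i _ => ?_)
  refine (Finset.abs_sum_le_sum_abs _ _).trans (Finset.sum_le_sum fun j _ => ?_)
  rw [abs_mul, abs_mul]
  have h0x : (0:ℝ) ≤ Rx := le_trans (abs_nonneg _) (hx i)
  have h0y : (0:ℝ) ≤ Ry := le_trans (abs_nonneg _) (hy j)
  gcongr
  · exact hx i
  · exact hy j

theorem bilinear_minimax (C : I → J → ℝ) (X : Set (I → ℝ)) (Y : Set (J → ℝ))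
    (hXc : IsCompact X) (hXv : Convex ℝ X) (hXn : X.Nonempty)
    (hYc : IsCompact Y) (hYv : Convex ℝ Y) (hYn : Y.Nonempty) :
    (⨆ x : X, ⨅ y : Y, BL C x.1 y.1) = ⨅ y : Y, ⨆ x : X, BL C x.1 y.1 := by
  classical
  haveI : Nonempty ↥X := hXn.to_subtype
  haveI : Nonempty ↥Y := hYn.to_subtype
  obtain ⟨Rx, hRx⟩ := hXc.isBounded.exists_norm_le
  obtain ⟨Ry, hRy⟩ := hYc.isBounded.exists_norm_le
  set M : ℝ := ∑ i : I, ∑ j : J, Rx * Ry * |C i j| with hMdef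
  have hM : ∀ x ∈ X, ∀ y ∈ Y, |BL C x y| ≤ M := by
    intro x hx y hy
    refine BL_abs_le C x y Rx Ry (fun i => ?_) (fun j => ?_)
    · exact le_trans (norm_le_pi_norm x i) (hRx x hx)
    · exact le_trans (norm_le_pi_norm y j) (hRy y hy)
  have bdd1 : ∀ y : ↥Y, BddAbove (Set.range fun x : ↥X => BL C x.1 y.1) := by
    intro y
    exact ⟨M, by rintro _ ⟨x, rfl⟩; exact (abs_le.1 (hM x.1 x.2 y.1 y.2)).2⟩
  have bdd2 : ∀ x : ↥X, BddBelow (Set.range fun y : ↥Y => BL C x.1 y.1) := by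
    intro x
    exact ⟨-M, by rintro _ ⟨y, rfl⟩; exact (abs_le.1 (hM x.1 x.2 y.1 y.2)).1⟩
  have bddS : BddAbove (Set.range fun x : ↥X => ⨅ y : ↥Y, BL C x.1 y.1) := by
    refine ⟨M, ?_⟩
    rintro _ ⟨x, rfl⟩
    obtain ⟨y⟩ := (inferInstance : Nonempty ↥Y)
    exact le_trans (ciInf_le (bdd2 x) y) (abs_le.1 (hM x.1 x.2 y.1 y.2)).2
  have bddI : BddBelow (Set.range fun y : ↥Y => ⨆ x : ↥X, BL C x.1 y.1) := by
    refine ⟨-M, ?_⟩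
    rintro _ ⟨y, rfl⟩
    obtain ⟨x⟩ := (inferInstance : Nonempty ↥X)
    exact le_trans (abs_le.1 (hM x.1 x.2 y.1 y.2)).1 (le_ciSup (bdd1 y) x)
  have le1 : (⨆ x : X, ⨅ y : Y, BL C x.1 y.1) ≤ ⨅ y : Y, ⨆ x : X, BL C x.1 y.1 := by
    refine ciSup_le fun x => le_ciInf fun y => ?_
    exact le_trans (ciInf_le (bdd2 x) y) (le_ciSup (bdd1 y) x)
  set v : ℝ := ⨅ y : Y, ⨆ x : X, BL C x.1 y.1 with hv
  have hclosed : ∀ y : ↥Y, IsClosed {x : I → ℝ | v ≤ BL C x y.1} :=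
    fun y => isClosed_le continuous_const (BL_cont_left C y.1)
  have hfin : ∀ u : Finset ↥Y, (X ∩ ⋂ y ∈ u, {x : I → ℝ | v ≤ BL C x y.1}).Nonempty := by
    intro u
    by_contra hcon'
    have hcon : ∀ x ∈ X, ∃ y ∈ u, BL C x y.1 < v := by
      intro x hx
      by_contra h
      push_neg at h
      exact hcon' ⟨x, hx, Set.mem_biInter fun y hy => h y hy⟩
    set φ : (I → ℝ) → (↥u → ℝ) := fun x => fun y => BL C x y.1.1 - v with hφ
    have hφcont : Continuous φ :=
      continuous_pi fun y => (BL_cont_left C y.1.1).sub continuous_const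
    have hDc : IsCompact (φ '' X) := hXc.image hφcont
    have hDv : Convex ℝ (φ '' X) := by
      rintro z ⟨xz, hxz, rfl⟩ w ⟨xw, hxw, rfl⟩ a b ha hb hab
      refine ⟨a • xz + b • xw, hXv hxz hxw ha hb hab, ?_⟩
      funext y
      simp only [φ, Pi.add_apply, Pi.smul_apply, smul_eq_mul]
      rw [BL_affine_left]
      linear_combination v * hab
    set O : Set (↥u → ℝ) := Set.pi Set.univ fun _ => Ici (0:ℝ) with hO
    have hOc : Convex ℝ O := convex_pi fun _ _ => convex_Ici 0
    have hOcl : IsClosed O := isClosed_set_pi fun _ _ => isClosed_Ici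
    have hdisj : Disjoint (φ '' X) O := by
      rw [Set.disjoint_left]
      rintro z ⟨xz, hxz, rfl⟩ hzO
      obtain ⟨y, hyu, hylt⟩ := hcon xz hxz
      have h0 := hzO ⟨y, hyu⟩ (Set.mem_univ _)
      simp only [φ, Set.mem_Ici] at h0
      linarith
    obtain ⟨f, a, b, hfD, hab, hfO⟩ :=
      geometric_hahn_banach_compact_closed hDv hDc hOc hOcl hdisj
    have hb0 : b < 0 := by
      have h0 : (0 : ↥u → ℝ) ∈ O := by intro y _; simp
      have := hfO 0 h0
      simpa using this
    set p : ↥u → ℝ := fun y => f (fun y' => if y = y' then 1 else 0) with hp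
    have hfrep : ∀ z : ↥u → ℝ, f z = ∑ y, z y * p y := by
      intro z
      conv_lhs => rw [pi_eq_sum_univ z]
      rw [map_sum]
      exact Finset.sum_congr rfl fun y _ => by rw [map_smul, smul_eq_mul]
    have hpnn : ∀ y, 0 ≤ p y := by
      intro y
      by_contra hneg
      push_neg at hneg
      have hmem : ((b - 1) / p y) • (fun y' => if y = y' then (1:ℝ) else 0) ∈ O := by
        intro y' _
        simp only [Pi.smul_apply, smul_eq_mul, Set.mem_Ici]
        by_cases h : y = y'
        · subst h
          rw [if_pos rfl, mul_one]
          exact div_nonneg_of_nonpos (by linarith) hneg.le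
        · rw [if_neg h, mul_zero]
      have hO2 := hfO _ hmem
      rw [map_smul, smul_eq_mul] at hO2
      have hO3 : b < (b - 1) / p y * p y := hO2
      rw [div_mul_cancel₀ _ (ne_of_lt hneg)] at hO3
      linarith
    have hSnn : 0 ≤ ∑ y, p y := Finset.sum_nonneg fun y _ => hpnn y
    have hS : 0 < ∑ y, p y := by
      rcases hSnn.eq_or_lt with hS0 | h
      · exfalso
        have hz : ∀ y ∈ Finset.univ, p y = 0 :=
          (Finset.sum_eq_zero_iff_of_nonneg fun y _ => hpnn y).1 hS0.symm
        obtain ⟨x0, hx0⟩ := hXn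
        have := hfD (φ x0) ⟨x0, hx0, rfl⟩
        rw [hfrep] at this
        rw [Finset.sum_eq_zero fun y hy => by rw [hz y hy, mul_zero]] at this
        linarith
      · exact h
    obtain ⟨S, hSdef⟩ : ∃ S : ℝ, S = ∑ y, p y := ⟨_, rfl⟩
    rw [← hSdef] at hS hSnn
    have hSne : S ≠ 0 := ne_of_gt hS
    set ybar : J → ℝ := ∑ y : ↥u, (p y / S) • (y.1.1 : J → ℝ) with hybardef
    have hybar : ybar ∈ Y := by
      refine hYv.sum_mem (fun y _ => div_nonneg (hpnn y) hS.le) ?_ (fun y _ => y.1.2)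
      rw [← Finset.sum_div, ← hSdef]
      exact div_self hSne
    have hlt : ∀ x ∈ X, BL C x ybar < v := by
      intro x hx
      have h1 : f (φ x) < a := hfD _ ⟨x, hx, rfl⟩
      rw [hfrep] at h1
      simp only [φ] at h1
      have h2 : BL C x ybar = (∑ y, (BL C x y.1.1 - v) * p y) / S + v := by
        rw [hybardef, BL_sum_right]
        have e1 : ∑ y, (BL C x y.1.1 - v) * p y
            = (∑ y, p y / S * BL C x y.1.1) * S - v * S := by
          rw [Finset.sum_mul]
          rw [hSdef, Finset.mul_sum, ← Finset.sum_sub_distrib]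
          refine Finset.sum_congr rfl fun y _ => ?_
          rw [← hSdef, sub_mul]
          congr 1
          field_simp
        rw [e1]
        field_simp
        ring
      rw [h2]
      have h3 : (∑ y, (BL C x y.1.1 - v) * p y) / S < 0 :=
        div_neg_of_neg_of_pos (by linarith) hS
      linarith
    obtain ⟨xm, hxm, hmax⟩ := hXc.exists_isMaxOn hXn (BL_cont_left C ybar).continuousOn
    have h4 : v ≤ BL C xm ybar := by
      have h5 : v ≤ ⨆ x : X, BL C x.1 ybar := ciInf_le bddI ⟨ybar, hybar⟩
      refine h5.trans (ciSup_le fun x => ?_)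
      exact hmax x.2
    exact absurd h4 (not_le.2 (hlt xm hxm))
  obtain ⟨xstar, hxX, hxI⟩ :=
    hXc.inter_iInter_nonempty (fun y : ↥Y => {x : I → ℝ | v ≤ BL C x y.1}) hclosed hfin
  have hxall : ∀ y : ↥Y, v ≤ BL C xstar y.1 := fun y => Set.mem_iInter.1 hxI y
  refine le_antisymm le1 ?_
  refine le_ciSup_of_le bddS ⟨xstar, hxX⟩ (le_ciInf fun y => hxall y)

end Minimax


open scoped BigOperators


/-- A two-player zero-sum partially observable stochastic game. -/
structure POSG where
  S : Type
  A1 : Type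
  A2 : Type
  Z1 : Type
  Z2 : Type
  [fintS : Fintype S]
  [fintA1 : Fintype A1]
  [fintA2 : Fintype A2]
  [fintZ1 : Fintype Z1]
  [fintZ2 : Fintype Z2]
  [neS : Nonempty S]
  [neA1 : Nonempty A1]
  [neA2 : Nonempty A2]
  [neZ1 : Nonempty Z1]
  [neZ2 : Nonempty Z2]
  P : S → A1 → A2 → S × Z1 × Z2 → ℝ
  P_nonneg : ∀ s a1 a2 x, 0 ≤ P s a1 a2 x
  P_sum_one : ∀ s a1 a2, ∑ x, P s a1 a2 x = 1
  r : S → A1 → A2 → ℝ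
  H : ℕ
  γ : ℝ
  γ_nonneg : 0 ≤ γ
  γ_lt_one : γ < 1

attribute [instance] POSG.fintS POSG.fintA1 POSG.fintA2 POSG.fintZ1 POSG.fintZ2
  POSG.neS POSG.neA1 POSG.neA2 POSG.neZ1 POSG.neZ2

/-- A length-`t` private history: a sequence of action-observation pairs. -/
abbrev Hist (A Z : Type) (t : ℕ) : Type := Fin t → A × Z

/-- A vector indexed by state–joint-history triples (the ambient space of occupancy states). -/
abbrev OccVec (G : POSG) (t : ℕ) : Type := G.S × Hist G.A1 G.Z1 t × Hist G.A2 G.Z2 t → ℝ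

/-- `o` is an occupancy state (a probability distribution). -/
def IsOcc (G : POSG) (t : ℕ) (o : OccVec G t) : Prop :=
  (∀ x, 0 ≤ o x) ∧ ∑ x, o x = 1

/-- A vector indexed by history–action pairs (the ambient space of behavioral decision rules). -/
abbrev DRVec (A Z : Type) (t : ℕ) : Type := Hist A Z t → A → ℝ

/-- `β` is a behavioral decision rule. -/
def IsDR {A Z : Type} [Fintype A] (t : ℕ) (β : DRVec A Z t) : Prop :=
  (∀ θ a, 0 ≤ β θ a) ∧ ∀ θ, ∑ a, β θ a = 1

/-- The occupancy-state transition `T(o, β¹, β²)`. -/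
noncomputable def Tr (G : POSG) (t : ℕ) (o : OccVec G t)
    (β1 : DRVec G.A1 G.Z1 t) (β2 : DRVec G.A2 G.Z2 t) : OccVec G (t + 1) :=
  fun x =>
    β1 (Fin.init x.2.1) (x.2.1 (Fin.last t)).1 * β2 (Fin.init x.2.2) (x.2.2 (Fin.last t)).1 *
      ∑ s, G.P s (x.2.1 (Fin.last t)).1 (x.2.2 (Fin.last t)).1
          (x.1, (x.2.1 (Fin.last t)).2, (x.2.2 (Fin.last t)).2) *
        o (s, Fin.init x.2.1, Fin.init x.2.2)

/-- The expected immediate reward `r(o, β¹, β²)`. -/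
noncomputable def Rew (G : POSG) (t : ℕ) (o : OccVec G t)
    (β1 : DRVec G.A1 G.Z1 t) (β2 : DRVec G.A2 G.Z2 t) : ℝ :=
  ∑ x : G.S × Hist G.A1 G.Z1 t × Hist G.A2 G.Z2 t, ∑ a1 : G.A1, ∑ a2 : G.A2,
    o x * β1 x.2.1 a1 * β2 x.2.2 a2 * G.r x.1 a1 a2

/-- A behavioral strategy: a decision rule for each time step. -/
abbrev Strat (A Z : Type) : Type := ∀ t : ℕ, DRVec A Z t

def IsStrat {A Z : Type} [Fintype A] (β : Strat A Z) : Prop := ∀ t, IsDR t (β t)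

/-- Value with `n` remaining steps starting at time `t`. -/
noncomputable def ValAux (G : POSG) :
    (n : ℕ) → (t : ℕ) → OccVec G t → Strat G.A1 G.Z1 → Strat G.A2 G.Z2 → ℝ
  | 0, _, _, _, _ => 0
  | n + 1, t, o, β1, β2 =>
      Rew G t o (β1 t) (β2 t) + G.γ * ValAux G n (t + 1) (Tr G t o (β1 t) (β2 t)) β1 β2

/-- The value `V_τ(o_τ, β_{τ:H−1})` (with `V_H = 0`). -/
noncomputable def Val (G : POSG) (t : ℕ) (o : OccVec G t)
    (β1 : Strat G.A1 G.Z1) (β2 : Strat G.A2 G.Z2) : ℝ :=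
  ValAux G (G.H - t) t o β1 β2

/-- The optimal (maximin) value `V*_τ(o_τ)`. -/
noncomputable def Vstar (G : POSG) (t : ℕ) (o : OccVec G t) : ℝ :=
  ⨆ β1 : {β : Strat G.A1 G.Z1 // IsStrat β},
    ⨅ β2 : {β : Strat G.A2 G.Z2 // IsStrat β}, Val G t o β1.1 β2.1

/-- The local game `Q*_τ(o_τ, β¹_τ, β²_τ)`. -/
noncomputable def Qstar (G : POSG) (t : ℕ) (o : OccVec G t)
    (β1 : DRVec G.A1 G.Z1 t) (β2 : DRVec G.A2 G.Z2 t) : ℝ :=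
  Rew G t o β1 β2 + G.γ * Vstar G (t + 1) (Tr G t o β1 β2)


section Helpers

lemma abs_ciSup_le {ι : Sort*} [Nonempty ι] (f : ι → ℝ) (C : ℝ) (h : ∀ i, |f i| ≤ C) :
    |⨆ i, f i| ≤ C := by
  rw [abs_le]
  constructor
  · obtain ⟨i⟩ := ‹Nonempty ι›
    refine le_trans (abs_le.1 (h i)).1 (le_ciSup ⟨C, ?_⟩ i)
    rintro _ ⟨j, rfl⟩; exact (abs_le.1 (h j)).2
  · exact ciSup_le fun i => (abs_le.1 (h i)).2

lemma abs_ciInf_le {ι : Sort*} [Nonempty ι] (f : ι → ℝ) (C : ℝ) (h : ∀ i, |f i| ≤ C) :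
    |⨅ i, f i| ≤ C := by
  rw [abs_le]
  constructor
  · exact le_ciInf fun i => (abs_le.1 (h i)).1
  · obtain ⟨i⟩ := ‹Nonempty ι›
    refine le_trans (ciInf_le ⟨-C, ?_⟩ i) (abs_le.1 (h i)).2
    rintro _ ⟨j, rfl⟩; exact (abs_le.1 (h j)).1

lemma le_add_mul_ciInf {c R g : ℝ} (hg : 0 ≤ g) {ι : Sort*} [Nonempty ι] (f : ι → ℝ)
    (h : ∀ i, c ≤ R + g * f i) : c ≤ R + g * ⨅ i, f i := by
  have e : g * ⨅ i, f i = ⨅ i, g * f i := Real.mul_iInf_of_nonneg hg f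
  have h2 : c - R ≤ ⨅ i, g * f i := le_ciInf fun i => by linarith [h i]
  rw [e]; linarith

lemma add_mul_ciSup_le {c R g : ℝ} (hg : 0 ≤ g) {ι : Sort*} [Nonempty ι] (f : ι → ℝ)
    (h : ∀ i, R + g * f i ≤ c) : R + g * ⨆ i, f i ≤ c := by
  have e : g * ⨆ i, f i = ⨆ i, g * f i := Real.mul_iSup_of_nonneg hg f
  have h2 : (⨆ i, g * f i) ≤ c - R := ciSup_le fun i => by linarith [h i]
  rw [e]; linarith

lemma range_subtype_eq {α : Sort*} {β : Type*} (g : α → β) (s : Set β)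
    (hr : Set.range g = s) (f : β → ℝ) :
    (Set.range fun a => f (g a)) = Set.range (fun y : s => f y.1) := by
  ext z
  constructor
  · rintro ⟨a, rfl⟩
    exact ⟨⟨g a, hr ▸ Set.mem_range_self a⟩, rfl⟩
  · rintro ⟨⟨yv, hy⟩, rfl⟩
    rw [← hr] at hy
    obtain ⟨a, rfl⟩ := hy
    exact ⟨a, rfl⟩

lemma ciInf_comp_range {α : Sort*} {β : Type*} (g : α → β) (s : Set β)
    (hr : Set.range g = s) (f : β → ℝ) : ⨅ a, f (g a) = ⨅ y : s, f y.1 := by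
  rw [iInf, iInf, range_subtype_eq g s hr f]

lemma ciSup_comp_range {α : Sort*} {β : Type*} (g : α → β) (s : Set β)
    (hr : Set.range g = s) (f : β → ℝ) : ⨆ a, f (g a) = ⨆ y : s, f y.1 := by
  rw [iSup, iSup, range_subtype_eq g s hr f]

end Helpers


section Basics

noncomputable def unifDR (A Z : Type) [Fintype A] [Nonempty A] (t : ℕ) : DRVec A Z t :=
  fun _ _ => (Fintype.card A : ℝ)⁻¹

lemma unifDR_isDR (A Z : Type) [Fintype A] [Nonempty A] (t : ℕ) : IsDR t (unifDR A Z t) := by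
  constructor
  · intro θ a; unfold unifDR; positivity
  · intro θ
    unfold unifDR
    rw [Finset.sum_const, Finset.card_univ, nsmul_eq_mul, mul_inv_cancel₀]
    exact Nat.cast_ne_zero.2 Fintype.card_ne_zero

instance instNeDRsub (A Z : Type) [Fintype A] [Nonempty A] (t : ℕ) :
    Nonempty {β : DRVec A Z t // IsDR t β} := ⟨⟨_, unifDR_isDR A Z t⟩⟩

instance instNeStratsub (A Z : Type) [Fintype A] [Nonempty A] :
    Nonempty {β : Strat A Z // IsStrat β} := ⟨⟨_, fun t => unifDR_isDR A Z t⟩⟩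

def histEquiv (A Z : Type) (t : ℕ) : Hist A Z (t+1) ≃ Hist A Z t × (A × Z) where
  toFun θ := (Fin.init θ, θ (Fin.last t))
  invFun p := Fin.snoc p.1 p.2
  left_inv θ := Fin.snoc_init_self θ
  right_inv p := by
    refine Prod.ext ?_ ?_ <;> simp

lemma sum_hist_succ {A Z : Type} [Fintype A] [Fintype Z] (t : ℕ) (f : Hist A Z (t+1) → ℝ) :
    ∑ θ, f θ = ∑ θ : Hist A Z t, ∑ q : A × Z, f (Fin.snoc θ q) := by
  refine (Fintype.sum_equiv (histEquiv A Z t) f (fun p => f (Fin.snoc p.1 p.2))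
    (fun θ => (congrArg f (Fin.snoc_init_self θ)).symm)).trans (Fintype.sum_prod_type _)

def trEquiv (S A1 Z1 A2 Z2 : Type) (t : ℕ) :
    S × Hist A1 Z1 (t+1) × Hist A2 Z2 (t+1) ≃
      ((Hist A1 Z1 t × Hist A2 Z2 t) × (A1 × A2)) × (S × Z1 × Z2) where
  toFun x := (((Fin.init x.2.1, Fin.init x.2.2), ((x.2.1 (Fin.last t)).1, (x.2.2 (Fin.last t)).1)),
    (x.1, (x.2.1 (Fin.last t)).2, (x.2.2 (Fin.last t)).2))
  invFun y := (y.2.1, Fin.snoc y.1.1.1 (y.1.2.1, y.2.2.1), Fin.snoc y.1.1.2 (y.1.2.2, y.2.2.2))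
  left_inv x := by
    obtain ⟨s, θ1, θ2⟩ := x
    simp
  right_inv y := by
    obtain ⟨⟨⟨θ1, θ2⟩, ⟨a1, a2⟩⟩, ⟨s, z1, z2⟩⟩ := y
    simp

lemma Tr_mass (G : POSG) (t : ℕ) (o : OccVec G t) (β1 : DRVec G.A1 G.Z1 t)
    (β2 : DRVec G.A2 G.Z2 t) (h1 : ∀ θ, ∑ a, β1 θ a = 1) (h2 : ∀ θ, ∑ a, β2 θ a = 1) :
    ∑ x, Tr G t o β1 β2 x = ∑ x, o x := by
  rw [← Equiv.sum_comp (trEquiv G.S G.A1 G.Z1 G.A2 G.Z2 t).symm (Tr G t o β1 β2)]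
  have step1 : ∀ y, Tr G t o β1 β2 ((trEquiv G.S G.A1 G.Z1 G.A2 G.Z2 t).symm y) =
      β1 y.1.1.1 y.1.2.1 * β2 y.1.1.2 y.1.2.2 *
        ∑ s, G.P s y.1.2.1 y.1.2.2 y.2 * o (s, y.1.1.1, y.1.1.2) := by
    intro y
    show Tr G t o β1 β2
      (y.2.1, Fin.snoc y.1.1.1 (y.1.2.1, y.2.2.1), Fin.snoc y.1.1.2 (y.1.2.2, y.2.2.2)) = _
    unfold Tr
    simp only [Fin.init_snoc, Fin.snoc_last]
  rw [Finset.sum_congr rfl fun y _ => step1 y]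
  rw [Fintype.sum_prod_type]
  have step2 : ∀ u : (Hist G.A1 G.Z1 t × Hist G.A2 G.Z2 t) × (G.A1 × G.A2),
      (∑ w : G.S × G.Z1 × G.Z2, β1 u.1.1 u.2.1 * β2 u.1.2 u.2.2 *
        ∑ s, G.P s u.2.1 u.2.2 w * o (s, u.1.1, u.1.2)) =
      β1 u.1.1 u.2.1 * β2 u.1.2 u.2.2 * ∑ s, o (s, u.1.1, u.1.2) := by
    intro u
    rw [← Finset.mul_sum]
    congr 1
    rw [Finset.sum_comm]
    refine Finset.sum_congr rfl fun s _ => ?_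
    rw [← Finset.sum_mul, G.P_sum_one, one_mul]
  rw [Finset.sum_congr rfl fun u _ => step2 u]
  rw [Fintype.sum_prod_type]
  have step3 : ∀ p : Hist G.A1 G.Z1 t × Hist G.A2 G.Z2 t,
      (∑ q : G.A1 × G.A2, β1 p.1 q.1 * β2 p.2 q.2 * ∑ s, o (s, p.1, p.2)) =
      ∑ s, o (s, p.1, p.2) := by
    intro p
    rw [← Finset.sum_mul]
    rw [show (∑ q : G.A1 × G.A2, β1 p.1 q.1 * β2 p.2 q.2) = 1 by
      rw [Fintype.sum_prod_type]
      rw [show (∑ a1, ∑ a2, β1 p.1 a1 * β2 p.2 a2) = ∑ a1, β1 p.1 a1 * ∑ a2, β2 p.2 a2 from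
        Finset.sum_congr rfl fun a1 _ => by rw [Finset.mul_sum]]
      rw [show (∑ a1, β1 p.1 a1 * ∑ a2, β2 p.2 a2) = ∑ a1, β1 p.1 a1 by
        refine Finset.sum_congr rfl fun a1 _ => by rw [h2, mul_one]]
      exact h1 p.1]
    rw [one_mul]
  rw [Finset.sum_congr rfl fun p _ => step3 p]
  rw [Finset.sum_comm]
  exact (Fintype.sum_prod_type _).symm

lemma Tr_isOcc (G : POSG) (t : ℕ) (o : OccVec G t) (ho : IsOcc G t o)
    (β1 : DRVec G.A1 G.Z1 t) (β2 : DRVec G.A2 G.Z2 t)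
    (h1 : IsDR t β1) (h2 : IsDR t β2) : IsOcc G (t+1) (Tr G t o β1 β2) := by
  constructor
  · intro x
    exact mul_nonneg (mul_nonneg (h1.1 _ _) (h2.1 _ _))
      (Finset.sum_nonneg fun s _ => mul_nonneg (G.P_nonneg _ _ _ _) (ho.1 _))
  · rw [Tr_mass G t o β1 β2 h1.2 h2.2]
    exact ho.2

end Basics


section Bounds

noncomputable def Rbound (G : POSG) : ℝ := ∑ s : G.S, ∑ a1 : G.A1, ∑ a2 : G.A2, |G.r s a1 a2|

lemma Rbound_nonneg (G : POSG) : 0 ≤ Rbound G := by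
  unfold Rbound; positivity

lemma abs_r_le (G : POSG) (s : G.S) (a1 : G.A1) (a2 : G.A2) : |G.r s a1 a2| ≤ Rbound G := by
  calc |G.r s a1 a2| ≤ ∑ a2', |G.r s a1 a2'| :=
        Finset.single_le_sum (f := fun a2' => |G.r s a1 a2'|)
          (fun _ _ => abs_nonneg _) (Finset.mem_univ _)
    _ ≤ ∑ a1', ∑ a2', |G.r s a1' a2'| :=
        Finset.single_le_sum (f := fun a1' => ∑ a2', |G.r s a1' a2'|)
          (fun _ _ => by positivity) (Finset.mem_univ _)
    _ ≤ Rbound G :=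
        Finset.single_le_sum (f := fun s' => ∑ a1', ∑ a2', |G.r s' a1' a2'|)
          (fun _ _ => by positivity) (Finset.mem_univ _)

lemma abs_Rew_le (G : POSG) (t : ℕ) (o : OccVec G t) (β1 : DRVec G.A1 G.Z1 t)
    (β2 : DRVec G.A2 G.Z2 t) (ho : IsOcc G t o) (h1 : IsDR t β1) (h2 : IsDR t β2) :
    |Rew G t o β1 β2| ≤ Rbound G := by
  unfold Rew
  refine le_trans (Finset.abs_sum_le_sum_abs _ _) ?_
  have hx : ∀ x : G.S × Hist G.A1 G.Z1 t × Hist G.A2 G.Z2 t,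
      |∑ a1, ∑ a2, o x * β1 x.2.1 a1 * β2 x.2.2 a2 * G.r x.1 a1 a2| ≤ o x * Rbound G := by
    intro x
    refine le_trans (Finset.abs_sum_le_sum_abs _ _) ?_
    refine le_trans (Finset.sum_le_sum fun a1 _ => Finset.abs_sum_le_sum_abs _ _) ?_
    have e1 : ∀ a1 a2, |o x * β1 x.2.1 a1 * β2 x.2.2 a2 * G.r x.1 a1 a2|
        ≤ o x * β1 x.2.1 a1 * β2 x.2.2 a2 * Rbound G := by
      intro a1 a2
      rw [abs_mul]
      have hnn : (0:ℝ) ≤ o x * β1 x.2.1 a1 * β2 x.2.2 a2 :=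
        mul_nonneg (mul_nonneg (ho.1 x) (h1.1 _ _)) (h2.1 _ _)
      rw [abs_of_nonneg hnn]
      exact mul_le_mul_of_nonneg_left (abs_r_le G _ _ _) hnn
    refine le_trans (Finset.sum_le_sum fun a1 _ => Finset.sum_le_sum fun a2 _ => e1 a1 a2) ?_
    have e2 : ∀ a1, ∑ a2, o x * β1 x.2.1 a1 * β2 x.2.2 a2 * Rbound G
        = o x * β1 x.2.1 a1 * Rbound G := by
      intro a1
      calc ∑ a2, o x * β1 x.2.1 a1 * β2 x.2.2 a2 * Rbound G
          = (o x * β1 x.2.1 a1 * Rbound G) * ∑ a2, β2 x.2.2 a2 := by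
            rw [Finset.mul_sum]
            exact Finset.sum_congr rfl fun a2 _ => by ring
        _ = o x * β1 x.2.1 a1 * Rbound G := by rw [h2.2, mul_one]
    have e3 : ∑ a1, o x * β1 x.2.1 a1 * Rbound G = o x * Rbound G := by
      calc ∑ a1, o x * β1 x.2.1 a1 * Rbound G
          = (o x * Rbound G) * ∑ a1, β1 x.2.1 a1 := by
            rw [Finset.mul_sum]
            exact Finset.sum_congr rfl fun a1 _ => by ring
        _ = o x * Rbound G := by rw [h1.2, mul_one]
    rw [Finset.sum_congr rfl fun a1 _ => e2 a1, e3]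
  refine le_trans (Finset.sum_le_sum fun x _ => hx x) ?_
  rw [← Finset.sum_mul, ho.2, one_mul]

lemma abs_ValAux_le (G : POSG) (m : ℕ) : ∀ (t : ℕ) (o : OccVec G t)
    (β1 : Strat G.A1 G.Z1) (β2 : Strat G.A2 G.Z2), IsOcc G t o → IsStrat β1 → IsStrat β2 →
    |ValAux G m t o β1 β2| ≤ m * Rbound G := by
  induction m with
  | zero => intro t o β1 β2 _ _ _; simp [ValAux]
  | succ m ih =>
    intro t o β1 β2 ho hs1 hs2
    have hocc' : IsOcc G (t+1) (Tr G t o (β1 t) (β2 t)) :=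
      Tr_isOcc G t o ho (β1 t) (β2 t) (hs1 t) (hs2 t)
    have h1 := abs_Rew_le G t o (β1 t) (β2 t) ho (hs1 t) (hs2 t)
    have h2 := ih (t+1) (Tr G t o (β1 t) (β2 t)) β1 β2 hocc' hs1 hs2
    have habs : |G.γ * ValAux G m (t+1) (Tr G t o (β1 t) (β2 t)) β1 β2| ≤ m * Rbound G := by
      rw [abs_mul, abs_of_nonneg G.γ_nonneg]
      calc G.γ * |ValAux G m (t+1) (Tr G t o (β1 t) (β2 t)) β1 β2|
          ≤ 1 * |ValAux G m (t+1) (Tr G t o (β1 t) (β2 t)) β1 β2| :=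
            mul_le_mul_of_nonneg_right (le_of_lt G.γ_lt_one) (abs_nonneg _)
        _ ≤ m * Rbound G := by rw [one_mul]; exact h2
    calc |ValAux G (m+1) t o β1 β2|
        = |Rew G t o (β1 t) (β2 t) + G.γ * ValAux G m (t+1) (Tr G t o (β1 t) (β2 t)) β1 β2| := rfl
      _ ≤ |Rew G t o (β1 t) (β2 t)| + |G.γ * ValAux G m (t+1) (Tr G t o (β1 t) (β2 t)) β1 β2| :=
          abs_add_le _ _
      _ ≤ Rbound G + m * Rbound G := add_le_add h1 habs
      _ = (m+1 : ℕ) * Rbound G := by push_cast; ring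

lemma ValAux_congr (G : POSG) (m : ℕ) : ∀ (t : ℕ) (o : OccVec G t) β1 β1' β2 β2',
    (∀ k, k < m → β1 (t+k) = β1' (t+k)) → (∀ k, k < m → β2 (t+k) = β2' (t+k)) →
    ValAux G m t o β1 β2 = ValAux G m t o β1' β2' := by
  induction m with
  | zero => intros; rfl
  | succ m ih =>
    intro t o β1 β1' β2 β2' h1 h2
    have e1 : β1 t = β1' t := by simpa using h1 0 (Nat.succ_pos m)
    have e2 : β2 t = β2' t := by simpa using h2 0 (Nat.succ_pos m)
    show Rew G t o (β1 t) (β2 t) + G.γ * ValAux G m (t+1) (Tr G t o (β1 t) (β2 t)) β1 β2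
      = Rew G t o (β1' t) (β2' t) + G.γ * ValAux G m (t+1) (Tr G t o (β1' t) (β2' t)) β1' β2'
    rw [e1, e2]
    congr 1
    congr 1
    refine ih (t+1) _ β1 β1' β2 β2' (fun k hk => ?_) (fun k hk => ?_)
    · have h3 := h1 (k+1) (by omega)
      rwa [show t + (k+1) = t+1+k from by omega] at h3
    · have h3 := h2 (k+1) (by omega)
      rwa [show t + (k+1) = t+1+k from by omega] at h3

def updStrat {A Z : Type} (β : Strat A Z) (t : ℕ) (d : DRVec A Z t) : Strat A Z :=
  fun u => if h : u = t then (fun θ a => d (h ▸ θ) a) else β u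

lemma updStrat_self {A Z : Type} (β : Strat A Z) (t : ℕ) (d : DRVec A Z t) :
    updStrat β t d t = d := by
  unfold updStrat
  rw [dif_pos rfl]

lemma updStrat_ne {A Z : Type} (β : Strat A Z) (t : ℕ) (d : DRVec A Z t) (u : ℕ) (h : u ≠ t) :
    updStrat β t d u = β u := by
  unfold updStrat
  rw [dif_neg h]

lemma updStrat_isStrat {A Z : Type} [Fintype A] (β : Strat A Z) (t : ℕ) (d : DRVec A Z t)
    (hβ : IsStrat β) (hd : IsDR t d) : IsStrat (updStrat β t d) := by
  intro u
  by_cases h : u = t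
  · subst h; rw [updStrat_self]; exact hd
  · rw [updStrat_ne _ _ _ _ h]; exact hβ u

lemma Val_rec (G : POSG) (τ : ℕ) (hτ : τ < G.H) (o : OccVec G τ)
    (β1 : Strat G.A1 G.Z1) (β2 : Strat G.A2 G.Z2) :
    Val G τ o β1 β2 = Rew G τ o (β1 τ) (β2 τ)
      + G.γ * Val G (τ+1) (Tr G τ o (β1 τ) (β2 τ)) β1 β2 := by
  unfold Val
  rw [show G.H - τ = (G.H - (τ+1)) + 1 from by omega]
  rfl

lemma Vstar_abs_le (G : POSG) (t : ℕ) (o : OccVec G t) (ho : IsOcc G t o) :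
    |Vstar G t o| ≤ (G.H - t : ℕ) * Rbound G := by
  unfold Vstar
  refine abs_ciSup_le _ _ fun β1 => abs_ciInf_le _ _ fun β2 => ?_
  exact abs_ValAux_le G _ t o β1.1 β2.1 ho β1.2 β2.2

noncomputable def QB (G : POSG) (τ : ℕ) : ℝ :=
  Rbound G + G.γ * ((G.H - (τ+1) : ℕ) * Rbound G)

lemma Qstar_abs_le (G : POSG) (τ : ℕ) (o : OccVec G τ) (ho : IsOcc G τ o)
    (d1 : DRVec G.A1 G.Z1 τ) (d2 : DRVec G.A2 G.Z2 τ) (h1 : IsDR τ d1) (h2 : IsDR τ d2) :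
    |Qstar G τ o d1 d2| ≤ QB G τ := by
  unfold Qstar QB
  refine le_trans (abs_add_le _ _) (add_le_add (abs_Rew_le G τ o d1 d2 ho h1 h2) ?_)
  rw [abs_mul, abs_of_nonneg G.γ_nonneg]
  exact mul_le_mul_of_nonneg_left
    (Vstar_abs_le G (τ+1) _ (Tr_isOcc G τ o ho d1 d2 h1 h2)) G.γ_nonneg

end Bounds


section Repr

def res {A Z : Type} {u v : ℕ} (h : v ≤ u) (θ : Hist A Z u) : Hist A Z v :=
  fun i => θ ⟨i.1, lt_of_lt_of_le i.2 h⟩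

lemma sum_res {A Z : Type} [Fintype A] [Fintype Z] {u v : ℕ} (e : u = v) (f : Hist A Z u → ℝ) :
    ∑ θ : Hist A Z u, f θ = ∑ Θ : Hist A Z v, f (res (le_of_eq e) Θ) := by
  subst e
  rfl

lemma strat_res {A Z : Type} (β : Strat A Z) {u v : ℕ} (e : u = v) (Θ : Hist A Z v) (a : A) :
    β u (res (le_of_eq e) Θ) a = β v Θ a := by
  subst e
  rfl

noncomputable def Gmat (G : POSG) (t : ℕ) (o : OccVec G t) : (k : ℕ) → OccVec G (t+k)
  | 0 => o
  | k+1 => fun x =>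
      ∑ s, G.P s (x.2.1 (Fin.last (t+k))).1 (x.2.2 (Fin.last (t+k))).1
          (x.1, (x.2.1 (Fin.last (t+k))).2, (x.2.2 (Fin.last (t+k))).2) *
        Gmat G t o k (s, Fin.init x.2.1, Fin.init x.2.2)

noncomputable def wgt {A Z : Type} (β : Strat A Z) (t : ℕ) : (k : ℕ) → Hist A Z (t+k) → ℝ
  | 0, _ => 1
  | k+1, θ => wgt β t k (Fin.init θ) * β (t+k) (Fin.init θ) (θ (Fin.last (t+k))).1

lemma Gmat_Tr (G : POSG) (t : ℕ) (o : OccVec G t) (d1 : DRVec G.A1 G.Z1 t)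
    (d2 : DRVec G.A2 G.Z2 t) :
    ∀ (k : ℕ) (s : G.S) (Θ1 : Hist G.A1 G.Z1 (t+(k+1))) (Θ2 : Hist G.A2 G.Z2 (t+(k+1))),
      Gmat G (t+1) (Tr G t o d1 d2) k
          (s, res (le_of_eq (by omega : (t+1)+k = t+(k+1))) Θ1,
            res (le_of_eq (by omega : (t+1)+k = t+(k+1))) Θ2)
        = d1 (res (by omega) Θ1) (Θ1 ⟨t, by omega⟩).1
          * d2 (res (by omega) Θ2) (Θ2 ⟨t, by omega⟩).1
          * Gmat G t o (k+1) (s, Θ1, Θ2) := by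
  intro k
  induction k with
  | zero =>
    intro s Θ1 Θ2
    rfl
  | succ k ih =>
    intro s Θ1 Θ2
    show (∑ s', G.P s' _ _ _ * Gmat G (t+1) (Tr G t o d1 d2) k
        (s', Fin.init (res (le_of_eq (by omega : (t+1)+(k+1) = t+(k+1+1))) Θ1),
          Fin.init (res (le_of_eq (by omega : (t+1)+(k+1) = t+(k+1+1))) Θ2)))
      = d1 _ _ * d2 _ _ *
        ∑ s', G.P s' (Θ1 (Fin.last (t+(k+1)))).1 (Θ2 (Fin.last (t+(k+1)))).1
            (s, (Θ1 (Fin.last (t+(k+1)))).2, (Θ2 (Fin.last (t+(k+1)))).2) *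
          Gmat G t o (k+1) (s', Fin.init Θ1, Fin.init Θ2)
    have e1 : Fin.init (res (le_of_eq (by omega : (t+1)+(k+1) = t+(k+1+1))) Θ1)
        = res (le_of_eq (by omega : (t+1)+k = t+(k+1))) (Fin.init Θ1) := rfl
    have e2 : Fin.init (res (le_of_eq (by omega : (t+1)+(k+1) = t+(k+1+1))) Θ2)
        = res (le_of_eq (by omega : (t+1)+k = t+(k+1))) (Fin.init Θ2) := rfl
    rw [e1, e2]
    simp only [ih]
    have e3 : (res (le_of_eq (by omega : (t+1)+(k+1) = t+(k+1+1))) Θ1) (Fin.last (t+1+k))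
        = Θ1 (Fin.last (t+(k+1))) :=
      congrArg Θ1 (Fin.ext (by simp only [Fin.val_last]; omega))
    have e4 : (res (le_of_eq (by omega : (t+1)+(k+1) = t+(k+1+1))) Θ2) (Fin.last (t+1+k))
        = Θ2 (Fin.last (t+(k+1))) :=
      congrArg Θ2 (Fin.ext (by simp only [Fin.val_last]; omega))
    have e6 : (res (u := t+(k+1)) (v := t) (by omega) (Fin.init Θ1)) = res (by omega) Θ1 := rfl
    have e7 : (res (u := t+(k+1)) (v := t) (by omega) (Fin.init Θ2)) = res (by omega) Θ2 := rfl
    have e8 : ((Fin.init Θ1) (⟨t, by omega⟩ : Fin (t+(k+1)))).1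
        = (Θ1 (⟨t, by omega⟩ : Fin (t+(k+1+1)))).1 := rfl
    have e9 : ((Fin.init Θ2) (⟨t, by omega⟩ : Fin (t+(k+1)))).1
        = (Θ2 (⟨t, by omega⟩ : Fin (t+(k+1+1)))).1 := rfl
    rw [e3, e4, e6, e7, e8, e9, Finset.mul_sum]
    exact Finset.sum_congr rfl fun s' _ => by ring

lemma wgt_succ {A Z : Type} (β : Strat A Z) (t : ℕ) :
    ∀ (k : ℕ) (Θ : Hist A Z (t+(k+1))),
      wgt β t (k+1) Θ
        = β t (res (by omega) Θ) ((Θ (⟨t, by omega⟩ : Fin (t+(k+1)))).1)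
          * wgt β (t+1) k (res (le_of_eq (by omega : (t+1)+k = t+(k+1))) Θ) := by
  intro k
  induction k with
  | zero =>
    intro Θ
    show (1:ℝ) * β (t+0) (Fin.init Θ) ((Θ (Fin.last (t+0))).1) = _ * (1:ℝ)
    rw [one_mul, mul_one]
    rfl
  | succ k ih =>
    intro Θ
    show wgt β t (k+1) (Fin.init Θ) * β (t+(k+1)) (Fin.init Θ) ((Θ (Fin.last (t+(k+1)))).1)
      = β t (res (by omega) Θ) ((Θ (⟨t, by omega⟩ : Fin (t+(k+1+1)))).1)
        * (wgt β (t+1) k (Fin.init (res (le_of_eq (by omega : (t+1)+(k+1) = t+(k+1+1))) Θ))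
          * β ((t+1)+k) (Fin.init (res (le_of_eq (by omega : (t+1)+(k+1) = t+(k+1+1))) Θ))
            (((res (le_of_eq (by omega : (t+1)+(k+1) = t+(k+1+1))) Θ) (Fin.last ((t+1)+k))).1))
    rw [ih (Fin.init Θ)]
    have c1 : Fin.init (res (le_of_eq (by omega : (t+1)+(k+1) = t+(k+1+1))) Θ)
        = res (le_of_eq (by omega : (t+1)+k = t+(k+1))) (Fin.init Θ) := rfl
    have c2 : res (u := t+(k+1)) (v := t) (by omega) (Fin.init Θ) = res (by omega) Θ := rfl
    have c3 : ((Fin.init Θ) (⟨t, by omega⟩ : Fin (t+(k+1)))).1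
        = (Θ (⟨t, by omega⟩ : Fin (t+(k+1+1)))).1 := rfl
    have c4 : ∀ a, β ((t+1)+k) (res (le_of_eq (by omega : (t+1)+k = t+(k+1))) (Fin.init Θ)) a
        = β (t+(k+1)) (Fin.init Θ) a :=
      strat_res (u := (t+1)+k) (v := t+(k+1)) β (by omega) (Fin.init Θ)
    have c5 : (((res (le_of_eq (by omega : (t+1)+(k+1) = t+(k+1+1))) Θ) (Fin.last ((t+1)+k))).1)
        = ((Θ (Fin.last (t+(k+1)))).1) :=
      congrArg (fun q => q.1) (congrArg Θ (Fin.ext (by simp only [Fin.val_last]; omega)))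
    rw [c1, c2, c3, c4, c5]
    ring


noncomputable def repTerm (G : POSG) (t : ℕ) (o : OccVec G t) (β1 : Strat G.A1 G.Z1)
    (β2 : Strat G.A2 G.Z2) (k : ℕ) : ℝ :=
  ∑ θ1 : Hist G.A1 G.Z1 (t+k), ∑ a1 : G.A1, ∑ θ2 : Hist G.A2 G.Z2 (t+k), ∑ a2 : G.A2,
    (wgt β1 t k θ1 * β1 (t+k) θ1 a1) * (wgt β2 t k θ2 * β2 (t+k) θ2 a2) *
      ∑ s, Gmat G t o k (s, θ1, θ2) * G.r s a1 a2

lemma sum_perm5 {A B C D E : Type} [Fintype A] [Fintype B] [Fintype C] [Fintype D] [Fintype E]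
    (f : A → B → C → D → E → ℝ) :
    ∑ a, ∑ b, ∑ c, ∑ d, ∑ e, f a b c d e = ∑ e, ∑ a, ∑ c, ∑ b, ∑ d, f a b c d e := by
  calc ∑ a, ∑ b, ∑ c, ∑ d, ∑ e, f a b c d e
      = ∑ a, ∑ b, ∑ c, ∑ e, ∑ d, f a b c d e := by
        refine Finset.sum_congr rfl fun a _ => Finset.sum_congr rfl fun b _ =>
          Finset.sum_congr rfl fun c _ => Finset.sum_comm
    _ = ∑ a, ∑ b, ∑ e, ∑ c, ∑ d, f a b c d e := by
        refine Finset.sum_congr rfl fun a _ => Finset.sum_congr rfl fun b _ => Finset.sum_comm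
    _ = ∑ a, ∑ e, ∑ b, ∑ c, ∑ d, f a b c d e := by
        refine Finset.sum_congr rfl fun a _ => Finset.sum_comm
    _ = ∑ e, ∑ a, ∑ b, ∑ c, ∑ d, f a b c d e := Finset.sum_comm
    _ = ∑ e, ∑ a, ∑ c, ∑ b, ∑ d, f a b c d e := by
        refine Finset.sum_congr rfl fun e _ => Finset.sum_congr rfl fun a _ => Finset.sum_comm

lemma repTerm_zero (G : POSG) (t : ℕ) (o : OccVec G t) (β1 : Strat G.A1 G.Z1)
    (β2 : Strat G.A2 G.Z2) : repTerm G t o β1 β2 0 = Rew G t o (β1 t) (β2 t) := by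
  unfold repTerm Rew
  simp only [wgt, Gmat, one_mul, Nat.add_zero, Fintype.sum_prod_type, Finset.mul_sum]
  rw [sum_perm5 (f := fun θ1 a1 θ2 a2 s =>
    β1 t θ1 a1 * β2 t θ2 a2 * (o (s, θ1, θ2) * G.r s a1 a2))]
  refine Finset.sum_congr rfl fun s _ => Finset.sum_congr rfl fun θ1 _ =>
    Finset.sum_congr rfl fun θ2 _ => Finset.sum_congr rfl fun a1 _ =>
    Finset.sum_congr rfl fun a2 _ => by ring


lemma repTerm_succ (G : POSG) (t : ℕ) (o : OccVec G t) (β1 : Strat G.A1 G.Z1)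
    (β2 : Strat G.A2 G.Z2) (k : ℕ) :
    repTerm G (t+1) (Tr G t o (β1 t) (β2 t)) β1 β2 k = repTerm G t o β1 β2 (k+1) := by
  unfold repTerm
  rw [sum_res (A := G.A1) (Z := G.Z1) (by omega : (t+1)+k = t+(k+1))]
  refine Finset.sum_congr rfl fun Θ1 _ => Finset.sum_congr rfl fun a1 _ => ?_
  rw [sum_res (A := G.A2) (Z := G.Z2) (by omega : (t+1)+k = t+(k+1))]
  refine Finset.sum_congr rfl fun Θ2 _ => Finset.sum_congr rfl fun a2 _ => ?_
  rw [wgt_succ β1 t k Θ1, wgt_succ β2 t k Θ2]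
  rw [strat_res (u := (t+1)+k) (v := t+(k+1)) β1 (by omega) Θ1 a1]
  rw [strat_res (u := (t+1)+k) (v := t+(k+1)) β2 (by omega) Θ2 a2]
  simp only [Gmat_Tr G t o (β1 t) (β2 t) k]
  simp only [Finset.mul_sum]
  refine Finset.sum_congr rfl fun s _ => by ring

lemma ValAux_rep (G : POSG) (m : ℕ) : ∀ (t : ℕ) (o : OccVec G t) (β1 : Strat G.A1 G.Z1)
    (β2 : Strat G.A2 G.Z2),
    ValAux G m t o β1 β2 = ∑ k ∈ Finset.range m, G.γ^k * repTerm G t o β1 β2 k := by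
  induction m with
  | zero => intro t o β1 β2; simp [ValAux]
  | succ m ih =>
    intro t o β1 β2
    rw [Finset.sum_range_succ']
    show Rew G t o (β1 t) (β2 t) + G.γ * ValAux G m (t+1) (Tr G t o (β1 t) (β2 t)) β1 β2 = _
    rw [ih (t+1) (Tr G t o (β1 t) (β2 t)) β1 β2, Finset.mul_sum]
    have hk : ∀ k, G.γ * (G.γ^k * repTerm G (t+1) (Tr G t o (β1 t) (β2 t)) β1 β2 k)
        = G.γ^(k+1) * repTerm G t o β1 β2 (k+1) := by
      intro k
      rw [repTerm_succ, pow_succ]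
      ring
    rw [Finset.sum_congr rfl fun k _ => hk k, pow_zero, one_mul, repTerm_zero]
    exact add_comm _ _


end Repr


section Plans

set_option linter.unusedSectionVars false

variable {A Z : Type} [Fintype A] [Fintype Z] [Nonempty A]

abbrev ITy (A Z : Type) (t n : ℕ) := Σ k : Fin n, (Hist A Z (t + k.1) × A)

noncomputable def XfV (t n : ℕ) (β : Strat A Z) : ITy A Z t n → ℝ :=
  fun i => wgt β t i.1.1 i.2.1 * β (t + i.1.1) i.2.1 i.2.2

def IsPlan (t n : ℕ) (x : ITy A Z t n → ℝ) : Prop :=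
  (∀ i, 0 ≤ x i) ∧
  (∀ (h0 : 0 < n) (θ : Hist A Z t), ∑ a, x ⟨⟨0, h0⟩, θ, a⟩ = 1) ∧
  (∀ (k : ℕ) (hk : k+1 < n) (θ : Hist A Z (t+(k+1))),
    ∑ a, x ⟨⟨k+1, hk⟩, θ, a⟩ = x ⟨⟨k, by omega⟩, Fin.init θ, (θ (Fin.last (t+k))).1⟩)

lemma wgt_nonneg (β : Strat A Z) (hβ : IsStrat β) (t : ℕ) :
    ∀ (k : ℕ) (θ : Hist A Z (t+k)), 0 ≤ wgt β t k θ := by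
  intro k
  induction k with
  | zero => intro θ; exact zero_le_one
  | succ k ih => intro θ; exact mul_nonneg (ih _) ((hβ _).1 _ _)

lemma XfV_isPlan (t n : ℕ) (β : Strat A Z) (hβ : IsStrat β) : IsPlan t n (XfV t n β) := by
  refine ⟨fun i => mul_nonneg (wgt_nonneg β hβ t _ _) ((hβ _).1 _ _), fun h0 θ => ?_, fun k hk θ => ?_⟩
  · show (∑ a, wgt β t 0 θ * β (t+0) θ a) = 1
    show (∑ a, (1:ℝ) * β (t+0) θ a) = 1
    simp only [one_mul]
    exact (hβ (t+0)).2 θ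
  · show (∑ a, wgt β t (k+1) θ * β (t+(k+1)) θ a) = _
    rw [← Finset.mul_sum, (hβ (t+(k+1))).2 θ, mul_one]
    rfl

noncomputable def nmz (f : A → ℝ) : A → ℝ :=
  if (∑ a, f a) = 0 then (fun _ => (Fintype.card A : ℝ)⁻¹) else fun a => f a / ∑ a', f a'

lemma nmz_nonneg (f : A → ℝ) (hf : ∀ a, 0 ≤ f a) : ∀ a, 0 ≤ nmz f a := by
  intro a
  unfold nmz
  split
  · positivity
  · exact div_nonneg (hf a) (Finset.sum_nonneg fun a' _ => hf a')

lemma nmz_sum (f : A → ℝ) : ∑ a, nmz f a = 1 := by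
  unfold nmz
  split
  case isTrue h =>
    rw [Finset.sum_const, Finset.card_univ, nsmul_eq_mul, mul_inv_cancel₀]
    exact Nat.cast_ne_zero.2 Fintype.card_ne_zero
  case isFalse h =>
    rw [← Finset.sum_div]
    exact div_self h

lemma nmz_mul (f : A → ℝ) (hf : ∀ a, 0 ≤ f a) (a : A) :
    (∑ a', f a') * nmz f a = f a := by
  unfold nmz
  split
  case isTrue h =>
    rw [h, zero_mul]
    have : f a ≤ 0 := by
      rw [← h]
      exact Finset.single_le_sum (fun a' _ => hf a') (Finset.mem_univ a)
    linarith [hf a]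
  case isFalse h =>
    field_simp

noncomputable def mkStrat (t n : ℕ) (x : ITy A Z t n → ℝ) : Strat A Z :=
  fun u => if h : ∃ k : Fin n, t + k.1 = u then
      fun θ a => nmz (fun a' => x ⟨h.choose, res (le_of_eq h.choose_spec) θ, a'⟩) a
    else unifDR A Z u

lemma choose_collapse (t n : ℕ) (x : ITy A Z t n → ℝ) (k : Fin n) (k0 : Fin n)
    (e : t + k0.1 = t + k.1) (θ : Hist A Z (t + k.1)) (a' : A) :
    x ⟨k0, res (le_of_eq e) θ, a'⟩ = x ⟨k, θ, a'⟩ := by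
  have hkk : k0 = k := Fin.ext (by omega)
  subst hkk
  rfl

lemma mkStrat_isStrat (t n : ℕ) (x : ITy A Z t n → ℝ) (hx : ∀ i, 0 ≤ x i) :
    IsStrat (mkStrat t n x) := by
  intro u
  unfold mkStrat
  split
  case isTrue h =>
    exact ⟨fun θ a => nmz_nonneg _ (fun a' => hx _) a, fun θ => nmz_sum _⟩
  case isFalse h =>
    exact unifDR_isDR A Z u

lemma mkStrat_apply (t n : ℕ) (x : ITy A Z t n → ℝ) (k : Fin n) (θ : Hist A Z (t + k.1))
    (a : A) : mkStrat t n x (t + k.1) θ a = nmz (fun a' => x ⟨k, θ, a'⟩) a := by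
  unfold mkStrat
  rw [dif_pos ⟨k, rfl⟩]
  refine congrFun (congrArg nmz (funext fun a' => ?_)) a
  exact choose_collapse t n x k (⟨k, rfl⟩ : ∃ k' : Fin n, t + k'.1 = t + k.1).choose
    (⟨k, rfl⟩ : ∃ k' : Fin n, t + k'.1 = t + k.1).choose_spec θ a'

lemma wgt_mkStrat (t n : ℕ) (x : ITy A Z t n → ℝ) (hx : IsPlan t n x) :
    ∀ (k : ℕ) (hk : k < n) (θ : Hist A Z (t+k)),
      wgt (mkStrat t n x) t k θ = ∑ a, x ⟨⟨k, hk⟩, θ, a⟩ := by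
  intro k
  induction k with
  | zero =>
    intro hk θ
    exact (hx.2.1 hk θ).symm
  | succ k ih =>
    intro hk θ
    show wgt (mkStrat t n x) t k (Fin.init θ)
        * mkStrat t n x (t+k) (Fin.init θ) ((θ (Fin.last (t+k))).1) = _
    rw [ih (by omega) (Fin.init θ)]
    rw [show mkStrat t n x (t+k) (Fin.init θ) ((θ (Fin.last (t+k))).1)
        = nmz (fun a' => x ⟨⟨k, by omega⟩, Fin.init θ, a'⟩) ((θ (Fin.last (t+k))).1) from
      mkStrat_apply t n x ⟨k, by omega⟩ (Fin.init θ) _]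
    rw [nmz_mul _ (fun a' => hx.1 _) _]
    exact (hx.2.2 k hk θ).symm

lemma XfV_mkStrat (t n : ℕ) (x : ITy A Z t n → ℝ) (hx : IsPlan t n x) :
    XfV t n (mkStrat t n x) = x := by
  funext i
  obtain ⟨k, θ, a⟩ := i
  show wgt (mkStrat t n x) t k.1 θ * mkStrat t n x (t + k.1) θ a = x ⟨k, θ, a⟩
  rw [wgt_mkStrat t n x hx k.1 k.2 θ]
  rw [mkStrat_apply t n x k θ a]
  exact nmz_mul _ (fun a' => hx.1 _) a

lemma plan_sum_le_one (t n : ℕ) (x : ITy A Z t n → ℝ) (hx : IsPlan t n x) :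
    ∀ (k : ℕ) (hk : k < n) (θ : Hist A Z (t+k)), (∑ a, x ⟨⟨k, hk⟩, θ, a⟩) ≤ 1 := by
  intro k
  induction k with
  | zero =>
    intro hk θ
    exact le_of_eq (hx.2.1 hk θ)
  | succ k ih =>
    intro hk θ
    rw [hx.2.2 k hk θ]
    refine le_trans (Finset.single_le_sum (f := fun a => x ⟨⟨k, by omega⟩, Fin.init θ, a⟩)
      (fun a _ => hx.1 _) (Finset.mem_univ ((θ (Fin.last (t+k))).1))) (ih (by omega) (Fin.init θ))

lemma plan_coord (t n : ℕ) (x : ITy A Z t n → ℝ) (hx : IsPlan t n x) (i : ITy A Z t n) :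
    x i ∈ Set.Icc (0:ℝ) 1 := by
  obtain ⟨k, θ, a⟩ := i
  refine ⟨hx.1 _, ?_⟩
  refine le_trans (Finset.single_le_sum (f := fun a' => x ⟨k, θ, a'⟩)
    (fun a' _ => hx.1 _) (Finset.mem_univ a)) ?_
  exact plan_sum_le_one t n x hx k.1 k.2 θ

lemma plan_compact (t n : ℕ) : IsCompact {x : ITy A Z t n → ℝ | IsPlan t n x} := by
  refine IsCompact.of_isClosed_subset
    (isCompact_univ_pi fun _ => isCompact_Icc (a := (0:ℝ)) (b := 1)) ?_ ?_
  · have hset : {x : ITy A Z t n → ℝ | IsPlan t n x}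
        = (⋂ i, {x : ITy A Z t n → ℝ | 0 ≤ x i}) ∩
          ((⋂ (h0 : 0 < n), ⋂ θ : Hist A Z t,
              {x : ITy A Z t n → ℝ | ∑ a, x ⟨⟨0, h0⟩, θ, a⟩ = 1}) ∩
            (⋂ (k : ℕ), ⋂ (hk : k+1 < n), ⋂ θ : Hist A Z (t+(k+1)),
              {x : ITy A Z t n → ℝ |
                ∑ a, x ⟨⟨k+1, hk⟩, θ, a⟩
                  = x ⟨⟨k, by omega⟩, Fin.init θ, (θ (Fin.last (t+k))).1⟩})) := by
      ext x
      simp only [Set.mem_setOf_eq, Set.mem_inter_iff, Set.mem_iInter]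
      constructor
      · intro h; exact ⟨h.1, h.2.1, h.2.2⟩
      · intro h; exact ⟨h.1, h.2.1, h.2.2⟩
    rw [hset]
    refine IsClosed.inter (isClosed_iInter fun i =>
      isClosed_le continuous_const (continuous_apply i)) (IsClosed.inter ?_ ?_)
    · exact isClosed_iInter fun h0 => isClosed_iInter fun θ =>
        isClosed_eq (continuous_finset_sum _ fun a _ => continuous_apply _) continuous_const
    · exact isClosed_iInter fun k => isClosed_iInter fun hk => isClosed_iInter fun θ =>
        isClosed_eq (continuous_finset_sum _ fun a _ => continuous_apply _) (continuous_apply _)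
  · intro x hx
    exact fun i _ => plan_coord t n x hx i

lemma plan_convex (t n : ℕ) : Convex ℝ {x : ITy A Z t n → ℝ | IsPlan t n x} := by
  intro x hx y hy a b ha hb hab
  refine ⟨fun i => ?_, fun h0 θ => ?_, fun k hk θ => ?_⟩
  · exact add_nonneg (mul_nonneg ha (hx.1 i)) (mul_nonneg hb (hy.1 i))
  · show (∑ a', (a • x + b • y) ⟨⟨0, h0⟩, θ, a'⟩) = 1
    simp only [Pi.add_apply, Pi.smul_apply, smul_eq_mul]
    rw [Finset.sum_add_distrib, ← Finset.mul_sum, ← Finset.mul_sum, hx.2.1 h0 θ, hy.2.1 h0 θ]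
    simpa using hab
  · show (∑ a', (a • x + b • y) ⟨⟨k+1, hk⟩, θ, a'⟩) = _
    simp only [Pi.add_apply, Pi.smul_apply, smul_eq_mul]
    rw [Finset.sum_add_distrib, ← Finset.mul_sum, ← Finset.mul_sum, hx.2.2 k hk θ, hy.2.2 k hk θ]

lemma plan_nonempty (t n : ℕ) : Set.Nonempty {x : ITy A Z t n → ℝ | IsPlan t n x} :=
  ⟨XfV t n (fun u => unifDR A Z u), XfV_isPlan t n _ (fun u => unifDR_isDR A Z u)⟩

lemma plan_range (t n : ℕ) :
    (Set.range fun β : {β : Strat A Z // IsStrat β} => XfV t n β.1)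
      = {x : ITy A Z t n → ℝ | IsPlan t n x} := by
  ext x
  constructor
  · rintro ⟨β, rfl⟩
    exact XfV_isPlan t n β.1 β.2
  · intro hx
    exact ⟨⟨mkStrat t n x, mkStrat_isStrat t n x hx.1⟩, XfV_mkStrat t n x hx⟩


end Plans


section StratMinimax

noncomputable def Cmat (G : POSG) (t n : ℕ) (o : OccVec G t) :
    ITy G.A1 G.Z1 t n → ITy G.A2 G.Z2 t n → ℝ :=
  fun i j => if h : i.1 = j.1 then
      G.γ ^ (i.1.1 : ℕ) * ∑ s, Gmat G t o i.1.1
          (s, i.2.1, res (le_of_eq (by rw [h])) j.2.1) * G.r s i.2.2 j.2.2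
    else 0

lemma Val_eq_BL (G : POSG) (t n : ℕ) (hn : G.H - t = n) (o : OccVec G t)
    (β1 : Strat G.A1 G.Z1) (β2 : Strat G.A2 G.Z2) :
    Val G t o β1 β2 = BL (Cmat G t n o) (XfV t n β1) (XfV t n β2) := by
  unfold Val
  rw [hn, ValAux_rep G n t o β1 β2]
  unfold BL
  rw [← Fin.sum_univ_eq_sum_range (fun k => G.γ^k * repTerm G t o β1 β2 k) n]
  rw [← Finset.univ_sigma_univ, Finset.sum_sigma]
  refine Finset.sum_congr rfl fun k _ => ?_
  rw [Fintype.sum_prod_type]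
  unfold repTerm
  rw [Finset.mul_sum]
  refine Finset.sum_congr rfl fun θ1 _ => ?_
  rw [Finset.mul_sum]
  refine Finset.sum_congr rfl fun a1 _ => ?_
  rw [← Finset.univ_sigma_univ, Finset.sum_sigma]
  rw [Finset.sum_eq_single_of_mem k (Finset.mem_univ k) ?side]
  case side =>
    intro k' _ hne
    refine Finset.sum_eq_zero fun p _ => ?_
    show _ * _ * Cmat G t n o ⟨k, θ1, a1⟩ ⟨k', p⟩ = 0
    unfold Cmat
    rw [dif_neg (fun h : k = k' => hne h.symm), mul_zero]
  rw [Fintype.sum_prod_type]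
  rw [Finset.mul_sum]
  refine Finset.sum_congr rfl fun θ2 _ => ?_
  rw [Finset.mul_sum]
  refine Finset.sum_congr rfl fun a2 _ => ?_
  show _ = XfV t n β1 ⟨k, θ1, a1⟩ * XfV t n β2 ⟨k, θ2, a2⟩
    * Cmat G t n o ⟨k, θ1, a1⟩ ⟨k, θ2, a2⟩
  unfold Cmat XfV
  rw [dif_pos rfl]
  have hres : ∀ (p : t + (k:ℕ) = t + (k:ℕ)), res (le_of_eq p) θ2 = θ2 := fun _ => rfl
  rw [hres rfl]
  ring

theorem strat_minimax (G : POSG) (t n : ℕ) (hn : G.H - t = n) (o : OccVec G t) :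
    (⨆ β1 : {β : Strat G.A1 G.Z1 // IsStrat β},
        ⨅ β2 : {β : Strat G.A2 G.Z2 // IsStrat β}, Val G t o β1.1 β2.1)
      = ⨅ β2 : {β : Strat G.A2 G.Z2 // IsStrat β},
          ⨆ β1 : {β : Strat G.A1 G.Z1 // IsStrat β}, Val G t o β1.1 β2.1 := by
  have hval : ∀ (β1 : Strat G.A1 G.Z1) (β2 : Strat G.A2 G.Z2),
      Val G t o β1 β2 = BL (Cmat G t n o) (XfV t n β1) (XfV t n β2) :=
    Val_eq_BL G t n hn o
  have step2 : ∀ xv : ITy G.A1 G.Z1 t n → ℝ,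
      (⨅ β2 : {β : Strat G.A2 G.Z2 // IsStrat β}, BL (Cmat G t n o) xv (XfV t n β2.1))
        = ⨅ y : {x : ITy G.A2 G.Z2 t n → ℝ | IsPlan t n x}, BL (Cmat G t n o) xv y.1 :=
    fun xv => ciInf_comp_range
      (fun β2 : {β : Strat G.A2 G.Z2 // IsStrat β} => XfV t n β2.1)
      _ (plan_range t n) (fun y => BL (Cmat G t n o) xv y)
  have step2' : ∀ yv : ITy G.A2 G.Z2 t n → ℝ,
      (⨆ β1 : {β : Strat G.A1 G.Z1 // IsStrat β}, BL (Cmat G t n o) (XfV t n β1.1) yv)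
        = ⨆ x : {x : ITy G.A1 G.Z1 t n → ℝ | IsPlan t n x}, BL (Cmat G t n o) x.1 yv :=
    fun yv => ciSup_comp_range
      (fun β1 : {β : Strat G.A1 G.Z1 // IsStrat β} => XfV t n β1.1)
      _ (plan_range t n) (fun x => BL (Cmat G t n o) x yv)
  calc (⨆ β1 : {β : Strat G.A1 G.Z1 // IsStrat β},
        ⨅ β2 : {β : Strat G.A2 G.Z2 // IsStrat β}, Val G t o β1.1 β2.1)
      = ⨆ x : {x : ITy G.A1 G.Z1 t n → ℝ | IsPlan t n x},
          ⨅ y : {x : ITy G.A2 G.Z2 t n → ℝ | IsPlan t n x}, BL (Cmat G t n o) x.1 y.1 := by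
        simp only [hval, step2]
        exact ciSup_comp_range
          (fun β1 : {β : Strat G.A1 G.Z1 // IsStrat β} => XfV t n β1.1)
          _ (plan_range t n)
          (fun x => ⨅ y : {x : ITy G.A2 G.Z2 t n → ℝ | IsPlan t n x}, BL (Cmat G t n o) x y.1)
    _ = ⨅ y : {x : ITy G.A2 G.Z2 t n → ℝ | IsPlan t n x},
          ⨆ x : {x : ITy G.A1 G.Z1 t n → ℝ | IsPlan t n x}, BL (Cmat G t n o) x.1 y.1 :=
        bilinear_minimax (Cmat G t n o) _ _ (plan_compact t n) (plan_convex t n)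
          (plan_nonempty t n) (plan_compact t n) (plan_convex t n) (plan_nonempty t n)
    _ = ⨅ β2 : {β : Strat G.A2 G.Z2 // IsStrat β},
          ⨆ β1 : {β : Strat G.A1 G.Z1 // IsStrat β}, Val G t o β1.1 β2.1 := by
        simp only [hval, step2']
        exact (ciInf_comp_range
          (fun β2 : {β : Strat G.A2 G.Z2 // IsStrat β} => XfV t n β2.1)
          _ (plan_range t n)
          (fun y => ⨆ x : {x : ITy G.A1 G.Z1 t n → ℝ | IsPlan t n x},
            BL (Cmat G t n o) x.1 y)).symm


end StratMinimax


section Final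

lemma bdd_val_below (G : POSG) (t : ℕ) (o : OccVec G t) (ho : IsOcc G t o)
    (β1 : Strat G.A1 G.Z1) (h1 : IsStrat β1) :
    BddBelow (Set.range fun β2 : {β : Strat G.A2 G.Z2 // IsStrat β} => Val G t o β1 β2.1) := by
  refine ⟨-((G.H - t : ℕ) * Rbound G), ?_⟩
  rintro _ ⟨β2, rfl⟩
  exact (abs_le.1 (abs_ValAux_le G _ t o β1 β2.1 ho h1 β2.2)).1

lemma bdd_val_above (G : POSG) (t : ℕ) (o : OccVec G t) (ho : IsOcc G t o)
    (β2 : Strat G.A2 G.Z2) (h2 : IsStrat β2) :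
    BddAbove (Set.range fun β1 : {β : Strat G.A1 G.Z1 // IsStrat β} => Val G t o β1.1 β2) := by
  refine ⟨(G.H - t : ℕ) * Rbound G, ?_⟩
  rintro _ ⟨β1, rfl⟩
  exact (abs_le.1 (abs_ValAux_le G _ t o β1.1 β2 ho β1.2 h2)).2

lemma bdd_inf_above (G : POSG) (t : ℕ) (o : OccVec G t) (ho : IsOcc G t o) :
    BddAbove (Set.range fun β1 : {β : Strat G.A1 G.Z1 // IsStrat β} =>
      ⨅ β2 : {β : Strat G.A2 G.Z2 // IsStrat β}, Val G t o β1.1 β2.1) := by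
  refine ⟨(G.H - t : ℕ) * Rbound G, ?_⟩
  rintro _ ⟨β1, rfl⟩
  obtain ⟨β2⟩ := (inferInstance : Nonempty {β : Strat G.A2 G.Z2 // IsStrat β})
  exact ciInf_le_of_le (bdd_val_below G t o ho β1.1 β1.2) β2
    (abs_le.1 (abs_ValAux_le G _ t o β1.1 β2.1 ho β1.2 β2.2)).2

theorem local_game_final (G : POSG) (τ : ℕ) (hτ : τ < G.H)
    (o : OccVec G τ) (ho : IsOcc G τ o) :
    (⨆ β1 : {β : DRVec G.A1 G.Z1 τ // IsDR τ β},
        ⨅ β2 : {β : DRVec G.A2 G.Z2 τ // IsDR τ β}, Qstar G τ o β1.1 β2.1)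
      = (⨅ β2 : {β : DRVec G.A2 G.Z2 τ // IsDR τ β},
          ⨆ β1 : {β : DRVec G.A1 G.Z1 τ // IsDR τ β}, Qstar G τ o β1.1 β2.1) ∧
    (⨆ β1 : {β : DRVec G.A1 G.Z1 τ // IsDR τ β},
        ⨅ β2 : {β : DRVec G.A2 G.Z2 τ // IsDR τ β}, Qstar G τ o β1.1 β2.1)
      = Vstar G τ o := by
  classical
  have hQb : ∀ (d1 : {β : DRVec G.A1 G.Z1 τ // IsDR τ β})
      (d2 : {β : DRVec G.A2 G.Z2 τ // IsDR τ β}), |Qstar G τ o d1.1 d2.1| ≤ QB G τ :=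
    fun d1 d2 => Qstar_abs_le G τ o ho d1.1 d2.1 d1.2 d2.2
  have bddQ1 : ∀ d1 : {β : DRVec G.A1 G.Z1 τ // IsDR τ β},
      BddBelow (Set.range fun d2 : {β : DRVec G.A2 G.Z2 τ // IsDR τ β} =>
        Qstar G τ o d1.1 d2.1) := by
    intro d1
    exact ⟨-QB G τ, by rintro _ ⟨d2, rfl⟩; exact (abs_le.1 (hQb d1 d2)).1⟩
  have bddQ2 : ∀ d2 : {β : DRVec G.A2 G.Z2 τ // IsDR τ β},
      BddAbove (Set.range fun d1 : {β : DRVec G.A1 G.Z1 τ // IsDR τ β} =>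
        Qstar G τ o d1.1 d2.1) := by
    intro d2
    exact ⟨QB G τ, by rintro _ ⟨d1, rfl⟩; exact (abs_le.1 (hQb d1 d2)).2⟩
  have bddSI : BddAbove (Set.range fun d1 : {β : DRVec G.A1 G.Z1 τ // IsDR τ β} =>
      ⨅ d2 : {β : DRVec G.A2 G.Z2 τ // IsDR τ β}, Qstar G τ o d1.1 d2.1) := by
    refine ⟨QB G τ, ?_⟩
    rintro _ ⟨d1, rfl⟩
    obtain ⟨d2⟩ := (inferInstance : Nonempty {β : DRVec G.A2 G.Z2 τ // IsDR τ β})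
    exact ciInf_le_of_le (bddQ1 d1) d2 (abs_le.1 (hQb d1 d2)).2
  have bddIS : BddBelow (Set.range fun d2 : {β : DRVec G.A2 G.Z2 τ // IsDR τ β} =>
      ⨆ d1 : {β : DRVec G.A1 G.Z1 τ // IsDR τ β}, Qstar G τ o d1.1 d2.1) := by
    refine ⟨-QB G τ, ?_⟩
    rintro _ ⟨d2, rfl⟩
    obtain ⟨d1⟩ := (inferInstance : Nonempty {β : DRVec G.A1 G.Z1 τ // IsDR τ β})
    exact le_ciSup_of_le (bddQ2 d2) d1 (abs_le.1 (hQb d1 d2)).1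
  have hSIIS : (⨆ d1 : {β : DRVec G.A1 G.Z1 τ // IsDR τ β},
      ⨅ d2 : {β : DRVec G.A2 G.Z2 τ // IsDR τ β}, Qstar G τ o d1.1 d2.1)
      ≤ ⨅ d2 : {β : DRVec G.A2 G.Z2 τ // IsDR τ β},
        ⨆ d1 : {β : DRVec G.A1 G.Z1 τ // IsDR τ β}, Qstar G τ o d1.1 d2.1 := by
    refine ciSup_le fun d1 => le_ciInf fun d2 => ?_
    exact le_trans (ciInf_le (bddQ1 d1) d2) (le_ciSup (bddQ2 d2) d1)
  -- Claim 1 : Vstar ≤ sup inf Q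
  have claim1 : Vstar G τ o ≤ ⨆ d1 : {β : DRVec G.A1 G.Z1 τ // IsDR τ β},
      ⨅ d2 : {β : DRVec G.A2 G.Z2 τ // IsDR τ β}, Qstar G τ o d1.1 d2.1 := by
    refine ciSup_le fun β1 => ?_
    have h1 : (⨅ β2 : {β : Strat G.A2 G.Z2 // IsStrat β}, Val G τ o β1.1 β2.1)
        ≤ ⨅ d2 : {β : DRVec G.A2 G.Z2 τ // IsDR τ β}, Qstar G τ o (β1.1 τ) d2.1 := by
      refine le_ciInf fun d2 => ?_
      have ho' : IsOcc G (τ+1) (Tr G τ o (β1.1 τ) d2.1) :=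
        Tr_isOcc G τ o ho (β1.1 τ) d2.1 (β1.2 τ) d2.2
      have h2 : (⨅ β2 : {β : Strat G.A2 G.Z2 // IsStrat β}, Val G τ o β1.1 β2.1)
          ≤ Rew G τ o (β1.1 τ) d2.1 + G.γ * ⨅ g2 : {β : Strat G.A2 G.Z2 // IsStrat β},
            Val G (τ+1) (Tr G τ o (β1.1 τ) d2.1) β1.1 g2.1 := by
        refine le_add_mul_ciInf G.γ_nonneg _ fun g2 => ?_
        have hβ2' : IsStrat (updStrat g2.1 τ d2.1) := updStrat_isStrat _ _ _ g2.2 d2.2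
        refine le_trans (ciInf_le (bdd_val_below G τ o ho β1.1 β1.2) ⟨_, hβ2'⟩) ?_
        rw [Val_rec G τ hτ o β1.1 (updStrat g2.1 τ d2.1), updStrat_self]
        have hcong : Val G (τ+1) (Tr G τ o (β1.1 τ) d2.1) β1.1 (updStrat g2.1 τ d2.1)
            = Val G (τ+1) (Tr G τ o (β1.1 τ) d2.1) β1.1 g2.1 := by
          unfold Val
          exact ValAux_congr G _ (τ+1) _ _ _ _ _ (fun k hk => rfl)
            (fun k hk => updStrat_ne g2.1 τ d2.1 (τ+1+k) (by omega))
        rw [hcong]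
      refine h2.trans ?_
      have h3 : (⨅ g2 : {β : Strat G.A2 G.Z2 // IsStrat β},
          Val G (τ+1) (Tr G τ o (β1.1 τ) d2.1) β1.1 g2.1)
          ≤ Vstar G (τ+1) (Tr G τ o (β1.1 τ) d2.1) :=
        le_ciSup (bdd_inf_above G (τ+1) _ ho') β1
      exact add_le_add (le_refl _) (mul_le_mul_of_nonneg_left h3 G.γ_nonneg)
    exact h1.trans (le_ciSup bddSI ⟨β1.1 τ, β1.2 τ⟩)
  -- Claim 2 : inf sup Q ≤ inf sup Val
  have claim2 : (⨅ d2 : {β : DRVec G.A2 G.Z2 τ // IsDR τ β},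
      ⨆ d1 : {β : DRVec G.A1 G.Z1 τ // IsDR τ β}, Qstar G τ o d1.1 d2.1)
      ≤ ⨅ β2 : {β : Strat G.A2 G.Z2 // IsStrat β},
        ⨆ β1 : {β : Strat G.A1 G.Z1 // IsStrat β}, Val G τ o β1.1 β2.1 := by
    refine le_ciInf fun β2 => ?_
    refine le_trans (ciInf_le bddIS ⟨β2.1 τ, β2.2 τ⟩) ?_
    refine ciSup_le fun d1 => ?_
    have ho' : IsOcc G (τ+1) (Tr G τ o d1.1 (β2.1 τ)) :=
      Tr_isOcc G τ o ho d1.1 (β2.1 τ) d1.2 (β2.2 τ)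
    have hβ1' : IsStrat (updStrat (fun u => unifDR G.A1 G.Z1 u) τ d1.1) := by
      exact updStrat_isStrat _ _ _ (fun u => unifDR_isDR G.A1 G.Z1 u) d1.2
    show Rew G τ o d1.1 (β2.1 τ) + G.γ * Vstar G (τ+1) (Tr G τ o d1.1 (β2.1 τ)) ≤ _
    rw [show Vstar G (τ+1) (Tr G τ o d1.1 (β2.1 τ))
        = ⨆ g1 : {β : Strat G.A1 G.Z1 // IsStrat β},
          ⨅ g2 : {β : Strat G.A2 G.Z2 // IsStrat β},
            Val G (τ+1) (Tr G τ o d1.1 (β2.1 τ)) g1.1 g2.1 from rfl]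
    refine add_mul_ciSup_le G.γ_nonneg _ fun g1 => ?_
    have h4 : (⨅ g2 : {β : Strat G.A2 G.Z2 // IsStrat β},
        Val G (τ+1) (Tr G τ o d1.1 (β2.1 τ)) g1.1 g2.1)
        ≤ Val G (τ+1) (Tr G τ o d1.1 (β2.1 τ)) g1.1 β2.1 :=
      ciInf_le (bdd_val_below G (τ+1) _ ho' g1.1 g1.2) β2
    have hβ1'' : IsStrat (updStrat g1.1 τ d1.1) := updStrat_isStrat _ _ _ g1.2 d1.2
    have hval' : Val G τ o (updStrat g1.1 τ d1.1) β2.1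
        = Rew G τ o d1.1 (β2.1 τ)
          + G.γ * Val G (τ+1) (Tr G τ o d1.1 (β2.1 τ)) g1.1 β2.1 := by
      rw [Val_rec G τ hτ o (updStrat g1.1 τ d1.1) β2.1, updStrat_self]
      have hcong : Val G (τ+1) (Tr G τ o d1.1 (β2.1 τ)) (updStrat g1.1 τ d1.1) β2.1
          = Val G (τ+1) (Tr G τ o d1.1 (β2.1 τ)) g1.1 β2.1 := by
        unfold Val
        exact ValAux_congr G _ (τ+1) _ _ _ _ _
          (fun k hk => updStrat_ne g1.1 τ d1.1 (τ+1+k) (by omega)) (fun k hk => rfl)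
      rw [hcong]
    calc Rew G τ o d1.1 (β2.1 τ) + G.γ * ⨅ g2 : {β : Strat G.A2 G.Z2 // IsStrat β},
            Val G (τ+1) (Tr G τ o d1.1 (β2.1 τ)) g1.1 g2.1
        ≤ Rew G τ o d1.1 (β2.1 τ)
          + G.γ * Val G (τ+1) (Tr G τ o d1.1 (β2.1 τ)) g1.1 β2.1 :=
          add_le_add (le_refl _) (mul_le_mul_of_nonneg_left h4 G.γ_nonneg)
      _ = Val G τ o (updStrat g1.1 τ d1.1) β2.1 := hval'.symm
      _ ≤ ⨆ β1 : {β : Strat G.A1 G.Z1 // IsStrat β}, Val G τ o β1.1 β2.1 :=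
          le_ciSup (bdd_val_above G τ o ho β2.1 β2.2) ⟨_, hβ1''⟩
  have hmm : (⨆ β1 : {β : Strat G.A1 G.Z1 // IsStrat β},
      ⨅ β2 : {β : Strat G.A2 G.Z2 // IsStrat β}, Val G τ o β1.1 β2.1)
      = ⨅ β2 : {β : Strat G.A2 G.Z2 // IsStrat β},
        ⨆ β1 : {β : Strat G.A1 G.Z1 // IsStrat β}, Val G τ o β1.1 β2.1 :=
    strat_minimax G τ (G.H - τ) rfl o
  have hISV : (⨅ d2 : {β : DRVec G.A2 G.Z2 τ // IsDR τ β},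
      ⨆ d1 : {β : DRVec G.A1 G.Z1 τ // IsDR τ β}, Qstar G τ o d1.1 d2.1)
      ≤ Vstar G τ o := by
    refine claim2.trans (le_of_eq ?_)
    exact hmm.symm
  constructor
  · exact le_antisymm hSIIS (hISV.trans claim1)
  · exact le_antisymm (hSIIS.trans hISV) claim1

end Final

/-- the maximin and minimax values of the local game `Q*_τ(o_τ, ·, ·)`
over behavioral decision rule profiles coincide and both equal `V*_τ(o_τ)`. -/
theorem local_game_maximin_minimax (G : POSG) (τ : ℕ) (hτ : τ < G.H)
    (o : OccVec G τ) (ho : IsOcc G τ o) :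
    (⨆ β1 : {β : DRVec G.A1 G.Z1 τ // IsDR τ β},
        ⨅ β2 : {β : DRVec G.A2 G.Z2 τ // IsDR τ β}, Qstar G τ o β1.1 β2.1)
      = (⨅ β2 : {β : DRVec G.A2 G.Z2 τ // IsDR τ β},
          ⨆ β1 : {β : DRVec G.A1 G.Z1 τ // IsDR τ β}, Qstar G τ o β1.1 β2.1) ∧
    (⨆ β1 : {β : DRVec G.A1 G.Z1 τ // IsDR τ β},
        ⨅ β2 : {β : DRVec G.A2 G.Z2 τ // IsDR τ β}, Qstar G τ o β1.1 β2.1)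
      = Vstar G τ o := by
  exact local_game_final G τ hτ o ho
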